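/- With the convention C(m,k)=0 when k<0 or m<k, for integers n ≥ 1, 1 ≤ d < c ≤ n+1 and 1 ≤ j ≤ n+1: C(n, j-1) = ∑_{i=1}^{d} C(c-1, i-1) C(n-c+1, j-i) + ∑_{ℓ=d}^{c-1} C(ℓ-1, d-1) C(n-ℓ, j-d-1). -/

import Mathlib

open Finset

/-- Binomial coefficient `C(m,k)` with the convention that `C(m,k) = 0`
whenever `m < k` or `k < 0` or `m < 0`, and `C(0,0) = 1`. -/
def intChoose (m k : ℤ) : ℕ :=
  if 0 ≤ k ∧ k ≤ m then (m.toNat).choose k.toNat else 0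

lemma intChoose_of_neg {m k : ℤ} (h : k < 0) : intChoose m k = 0 := by
  unfold intChoose; rw [if_neg (by omega)]

lemma intChoose_of_lt {m k : ℤ} (h : m < k) : intChoose m k = 0 := by
  unfold intChoose; rw [if_neg (by omega)]

lemma intChoose_zero {m : ℤ} (hm : 0 ≤ m) : intChoose m 0 = 1 := by
  unfold intChoose; rw [if_pos ⟨le_refl 0, hm⟩]; simp

lemma intChoose_natCast (M K : ℕ) : intChoose (M:ℤ) (K:ℤ) = M.choose K := by
  unfold intChoose
  split_ifs with h
  · simp
  · have : M < K := by omega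
    exact (Nat.choose_eq_zero_of_lt this).symm

lemma intChoose_succ {m : ℤ} (hm : 0 ≤ m) (k : ℤ) :
    intChoose (m+1) k = intChoose m k + intChoose m (k-1) := by
  rcases lt_or_ge k 0 with hk | hk
  · rw [intChoose_of_neg hk, intChoose_of_neg hk, intChoose_of_neg (by omega)]
  · lift m to ℕ using hm
    lift k to ℕ using hk
    cases k with
    | zero =>
      simp only [Nat.cast_zero]
      rw [intChoose_of_neg (show (0:ℤ)-1 < 0 by norm_num),
          intChoose_zero (by positivity), intChoose_zero (by positivity)]
    | succ K =>
      push_cast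
      rw [show ((K:ℤ)+1) - 1 = (K:ℤ) by ring,
          show ((m:ℤ)+1) = ((m+1:ℕ):ℤ) by push_cast; ring,
          show ((K:ℤ)+1) = ((K+1:ℕ):ℤ) by push_cast; ring,
          intChoose_natCast, intChoose_natCast, intChoose_natCast,
          Nat.choose_succ_succ]
      simp only [Nat.succ_eq_add_one]
      omega

lemma key_telescope (a b : ℤ → ℕ) {m : ℤ} (hm : 0 ≤ m) :
    (∑ i ∈ Icc 1 m, (a i + a (i-1)) * b i) + a m * b (m+1)
      = (∑ i ∈ Icc 1 m, a i * (b i + b (i+1))) + a 0 * b 1 := by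
  refine Int.le_induction (motive := fun m _ => (∑ i ∈ Icc 1 m, (a i + a (i-1)) * b i) + a m * b (m+1)
      = (∑ i ∈ Icc 1 m, a i * (b i + b (i+1))) + a 0 * b 1) ?_ ?_ m hm
  · simp
  · intro n hn ih
    have hnot : (n+1) ∉ Icc (1:ℤ) n := by simp only [mem_Icc]; omega
    have h1 : Icc (1:ℤ) (n+1) = insert (n+1) (Icc 1 n) := by
      ext x; simp only [mem_Icc, mem_insert]; omega
    rw [h1, Finset.sum_insert hnot, Finset.sum_insert hnot,
        show n + 1 - 1 = n by ring]
    zify at ih ⊢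
    linear_combination ih

lemma vdm (n j : ℤ) (d : ℤ) (hd : 1 ≤ d) :
    d ≤ n + 1 →
    (∑ i ∈ Icc 1 d, intChoose (d-1) (i-1) * intChoose (n-d+1) (j-i)) = intChoose n (j-1) := by
  refine Int.le_induction (motive := fun d _ => d ≤ n + 1 →
    (∑ i ∈ Icc 1 d, intChoose (d-1) (i-1) * intChoose (n-d+1) (j-i)) = intChoose n (j-1))
    ?_ ?_ d hd
  · intro _
    rw [Finset.Icc_self, Finset.sum_singleton, show (1:ℤ)-1 = 0 by ring,
        show n-1+1 = n by ring, intChoose_zero le_rfl, one_mul]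
  · intro d hd1 ih hle
    have hdn : d ≤ n := by omega
    have e1 : ∀ i ∈ Icc (1:ℤ) (d+1), intChoose (d+1-1) (i-1) * intChoose (n-(d+1)+1) (j-i)
        = ((fun i => intChoose (d-1) (i-1)) i + (fun i => intChoose (d-1) (i-1)) (i-1))
            * (fun i => intChoose (n-d) (j-i)) i := by
      intro i _
      simp only
      rw [show d+1-1 = (d-1)+1 by ring, show n-(d+1)+1 = n-d by ring,
          intChoose_succ (by omega : (0:ℤ) ≤ d-1) (i-1)]
    rw [Finset.sum_congr rfl e1]
    have hk := key_telescope (fun i => intChoose (d-1) (i-1)) (fun i => intChoose (n-d) (j-i))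
      (show (0:ℤ) ≤ d+1 by omega)
    rw [show d+1-1 = d by ring, intChoose_of_lt (by omega : d-1 < d), zero_mul, add_zero,
        show (0:ℤ)-1 = -1 by ring, intChoose_of_neg (by norm_num : (-1:ℤ) < 0), zero_mul,
        add_zero] at hk
    rw [hk]
    have e2 : ∀ i ∈ Icc (1:ℤ) (d+1), intChoose (d-1) (i-1)
          * (intChoose (n-d) (j-i) + intChoose (n-d) (j-(i+1)))
        = intChoose (d-1) (i-1) * intChoose (n-d+1) (j-i) := by
      intro i _
      rw [show n-d+1 = (n-d)+1 by ring, intChoose_succ (by omega : (0:ℤ) ≤ n-d) (j-i),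
          show j-i-1 = j-(i+1) by ring]
    rw [Finset.sum_congr rfl e2]
    have hnot : (d+1) ∉ Icc (1:ℤ) d := by simp only [mem_Icc]; omega
    have h1 : Icc (1:ℤ) (d+1) = insert (d+1) (Icc 1 d) := by
      ext x; simp only [mem_Icc, mem_insert]; omega
    rw [h1, Finset.sum_insert hnot, show d+1-1 = d by ring,
        intChoose_of_lt (by omega : d-1 < d), zero_mul, zero_add]
    exact ih (by omega)

lemma main_aux (n d j : ℤ) (hd : 1 ≤ d) (c : ℤ) (hdc : d ≤ c) : c ≤ n + 1 →
    intChoose n (j-1) =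
      (∑ i ∈ Icc 1 d, intChoose (c-1) (i-1) * intChoose (n-c+1) (j-i)) +
        ∑ l ∈ Icc d (c-1), intChoose (l-1) (d-1) * intChoose (n-l) (j-d-1) := by
  refine Int.le_induction (motive := fun c _ => c ≤ n + 1 →
    intChoose n (j-1) =
      (∑ i ∈ Icc 1 d, intChoose (c-1) (i-1) * intChoose (n-c+1) (j-i)) +
        ∑ l ∈ Icc d (c-1), intChoose (l-1) (d-1) * intChoose (n-l) (j-d-1)) ?_ ?_ c hdc
  · intro hle
    rw [show Icc d (d-1) = (∅ : Finset ℤ) from Finset.Icc_eq_empty (by omega),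
        Finset.sum_empty, add_zero, vdm n j d hd hle]
  · intro c hc ih hle
    have e1 : ∀ i ∈ Icc (1:ℤ) d, intChoose (c+1-1) (i-1) * intChoose (n-(c+1)+1) (j-i)
        = ((fun i => intChoose (c-1) (i-1)) i + (fun i => intChoose (c-1) (i-1)) (i-1))
            * (fun i => intChoose (n-c) (j-i)) i := by
      intro i _
      simp only
      rw [show c+1-1 = (c-1)+1 by ring, show n-(c+1)+1 = n-c by ring,
          intChoose_succ (by omega : (0:ℤ) ≤ c-1) (i-1)]
    rw [Finset.sum_congr rfl e1]
    have hk := key_telescope (fun i => intChoose (c-1) (i-1)) (fun i => intChoose (n-c) (j-i))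
      (show (0:ℤ) ≤ d by omega)
    rw [show (0:ℤ)-1 = -1 by ring, intChoose_of_neg (by norm_num : (-1:ℤ) < 0), zero_mul,
        add_zero, show j-(d+1) = j-d-1 by ring] at hk
    have e2 : ∀ i ∈ Icc (1:ℤ) d, intChoose (c-1) (i-1)
          * (intChoose (n-c) (j-i) + intChoose (n-c) (j-(i+1)))
        = intChoose (c-1) (i-1) * intChoose (n-c+1) (j-i) := by
      intro i _
      rw [show n-c+1 = (n-c)+1 by ring, intChoose_succ (by omega : (0:ℤ) ≤ n-c) (j-i),
          show j-i-1 = j-(i+1) by ring]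
    rw [Finset.sum_congr rfl e2] at hk
    rw [show c+1-1 = c by ring]
    have hnot : c ∉ Icc d (c-1) := by simp only [mem_Icc]; omega
    have h1 : Icc d c = insert c (Icc d (c-1)) := by
      ext x; simp only [mem_Icc, mem_insert]; omega
    rw [h1, Finset.sum_insert hnot]
    have ih' := ih (by omega)
    zify at ih' hk ⊢
    linear_combination ih' - hk

theorem choose_split_identity (n c d j : ℤ)
    (hn : 1 ≤ n) (hd : 1 ≤ d) (hdc : d < c) (hc : c ≤ n + 1) (hj1 : 1 ≤ j) (hj2 : j ≤ n + 1) :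
    intChoose n (j - 1) =
      (∑ i ∈ Finset.Icc 1 d, intChoose (c - 1) (i - 1) * intChoose (n - c + 1) (j - i)) +
        ∑ l ∈ Finset.Icc d (c - 1), intChoose (l - 1) (d - 1) * intChoose (n - l) (j - d - 1) := by
  exact main_aux n d j hd c (by omega) hc
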